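/- Assume n − s − i(τ+ε) ≠ 0 for every integer n ≥ 1. Define (a_n)_{n≥−1} by a_{−1} = 0, a₀ = 1, and, for all n ≥ 1, a_n = [−λ + (n−s−iτ−1)(n+s−iτ) + iκε(−2n+2s+1) + ε²] / (n(n−s−i(τ+ε))) · a_{n−1} + [2iκε((n−s−1) − i(τ−ε))] / (n(n−s−i(τ+ε))) · a_{n−2}. Suppose the power series Σ_{n≥0} a_n zⁿ has radius of convergence ρ > 0. Then the function P(z) = Σ_{n≥0} a_n zⁿ satisfies z(1−z)P″(z) + q₁(z)P′(z) + q₂(z)P(z) = 0 for all complex z with |z| < ρ. -/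

import Mathlib

open Complex

private def shf (u : ℕ → ℂ) : ℕ → ℂ := fun k => match k with
  | 0 => 0
  | Nat.succ k => u k

private lemma shf_zero (u : ℕ → ℂ) : shf u 0 = 0 := rfl

private lemma shf_succ (u : ℕ → ℂ) (k : ℕ) : shf u (k + 1) = u k := rfl

private lemma hasSum_shf {u : ℕ → ℂ} {z S : ℂ} (h : HasSum (fun k => u k * z ^ k) S) :
    HasSum (fun k => shf u k * z ^ k) (z * S) := by
  have h2 : HasSum (fun k => u k * z ^ (k + 1)) (z * S) := by
    have h3 := h.mul_left z
    have e : (fun k => z * (u k * z ^ k)) = fun k => u k * z ^ (k + 1) := by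
      funext k; ring
    rwa [e] at h3
  refine (Function.Injective.hasSum_iff Nat.succ_injective ?_).mp h2
  intro m hm
  match m with
  | 0 => simp [shf]
  | Nat.succ n => exact absurd ⟨n, rfl⟩ hm

private lemma hasSum_deriv (c : ℕ → ℂ) (f : ℂ → ℂ) (ρ : ℝ) (hρ : 0 < ρ)
    (hf : ∀ z : ℂ, ‖z‖ < ρ → HasSum (fun n : ℕ => c n * z ^ n) (f z)) :
    ∀ z : ℂ, ‖z‖ < ρ →
      HasSum (fun n : ℕ => (((n : ℕ) : ℂ) + 1) * c (n + 1) * z ^ n) (deriv f z) := by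
  set R := ENNReal.ofReal ρ with hR
  have hball : ∀ y : ℂ, y ∈ Metric.eball (0 : ℂ) R ↔ ‖y‖ < ρ := by
    intro y
    rw [Metric.mem_eball, edist_eq_enorm_sub, sub_zero, ← ofReal_norm, hR,
      ENNReal.ofReal_lt_ofReal_iff hρ]
  set p := FormalMultilinearSeries.ofScalars ℂ c with hp_def
  have hpapp : ∀ (y : ℂ) (n : ℕ), (p n fun _ => y) = c n * y ^ n := by
    intro y n
    rw [hp_def, FormalMultilinearSeries.ofScalars_apply_eq, smul_eq_mul]
  have hrad : R ≤ p.radius := by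
    apply ENNReal.le_of_forall_nnreal_lt
    intro r hr
    have hrρ : (r : ℝ) < ρ := by
      rw [← ENNReal.ofReal_coe_nnreal, hR, ENNReal.ofReal_lt_ofReal_iff hρ] at hr
      exact hr
    apply p.le_radius_of_summable
    have hsum := (hf ((r : ℝ) : ℂ) (by
      rw [Complex.norm_real]
      simpa [_root_.abs_of_nonneg r.coe_nonneg] using hrρ)).summable
    have hsum2 : Summable (fun n : ℕ => ‖c n * ((r : ℝ) : ℂ) ^ n‖) := hsum.norm
    refine hsum2.congr fun n => ?_
    rw [norm_mul, norm_pow, Complex.norm_real, Real.norm_eq_abs,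
      _root_.abs_of_nonneg r.coe_nonneg, hp_def, FormalMultilinearSeries.ofScalars_norm]
  have hp : HasFPowerSeriesOnBall f p 0 R := by
    refine ⟨hrad, by simpa [hR] using ENNReal.ofReal_pos.mpr hρ, ?_⟩
    intro y hy
    have h := hf y ((hball y).mp hy)
    simp only [hpapp, zero_add]
    exact h
  have hd := hp.fderiv
  intro z hz
  rcases eq_or_ne z 0 with rfl | hz0
  · have hder : deriv f 0 = c 1 := by
      have h := hp.hasFPowerSeriesAt.deriv
      rw [h, hpapp 1 1]
      simp
    rw [hder]
    have h0 := hasSum_single (f := fun n : ℕ => (((n : ℕ) : ℂ) + 1) * c (n + 1) * (0 : ℂ) ^ n) 0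
      (by intro b hb
          match b with
          | 0 => exact absurd rfl hb
          | Nat.succ n => simp [pow_succ])
    simpa using h0
  · have hmem : z ∈ Metric.eball (0 : ℂ) R := (hball z).mpr hz
    have h1 := (hd.hasSum hmem).mapL (ContinuousLinearMap.apply ℂ ℂ z)
    have hterm : ∀ n : ℕ, (ContinuousLinearMap.apply ℂ ℂ z) (p.derivSeries n fun _ => z)
        = (((n : ℕ) : ℂ) + 1) * c (n + 1) * z ^ (n + 1) := by
      intro n
      rw [ContinuousLinearMap.apply_apply, FormalMultilinearSeries.derivSeries_apply_diag,
        hpapp z (n + 1)]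
      push_cast [nsmul_eq_mul]
      ring
    have hval : (ContinuousLinearMap.apply ℂ ℂ z) (fderiv ℂ f (0 + z)) = z * deriv f z := by
      rw [ContinuousLinearMap.apply_apply, zero_add]
      have h2 : (fderiv ℂ f z) z = z * (fderiv ℂ f z) 1 := by
        have h3 := (fderiv ℂ f z).map_smul z (1 : ℂ)
        simpa [smul_eq_mul] using h3
      rw [h2, fderiv_apply_one_eq_deriv]
    simp only [hterm, hval] at h1
    have h2 := h1.mul_left z⁻¹
    have e1 : (fun n : ℕ => z⁻¹ * ((((n : ℕ) : ℂ) + 1) * c (n + 1) * z ^ (n + 1)))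
        = fun n : ℕ => (((n : ℕ) : ℂ) + 1) * c (n + 1) * z ^ n := by
      funext n; field_simp; ring
    rw [e1, inv_mul_cancel_left₀ hz0] at h2
    exact h2

/-- The power series whose coefficients satisfy the horizon three-term recurrence
(with `a₋₁ = 0`, `a₀ = 1`) sums, inside its disc of convergence, to a solution of
Equation (P): `z(1−z)P″ + q₁(z)P′ + q₂(z)P = 0`. -/
theorem horizon_series_solves_eqP
    (a : ℝ) (ha : |a| < 1) (s m : ℤ) (ω lam : ℂ) (hω : ω ≠ 0)
    (κ : ℝ) (hκ : κ = Real.sqrt (1 - a ^ 2))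
    (ε τ : ℂ) (hε : ε = 2 * ω) (hτ : τ = (ε - (m : ℂ) * (a : ℂ)) / (κ : ℂ))
    (hnz : ∀ n : ℕ, 1 ≤ n → (n : ℂ) - (s : ℂ) - I * (τ + ε) ≠ 0)
    (x : ℕ → ℂ)
    (hx0 : x 0 = 1)
    (hx1 : x 1 = ((-lam + ((1 : ℂ) - (s : ℂ) - I * τ - 1) * ((1 : ℂ) + (s : ℂ) - I * τ)
        + I * (κ : ℂ) * ε * (-2 * (1 : ℂ) + 2 * (s : ℂ) + 1) + ε ^ 2)
      / ((1 : ℂ) * ((1 : ℂ) - (s : ℂ) - I * (τ + ε)))) * x 0)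
    (hrec : ∀ n : ℕ, 2 ≤ n →
      x n = ((-lam + ((n : ℂ) - (s : ℂ) - I * τ - 1) * ((n : ℂ) + (s : ℂ) - I * τ)
              + I * (κ : ℂ) * ε * (-2 * (n : ℂ) + 2 * (s : ℂ) + 1) + ε ^ 2)
            / ((n : ℂ) * ((n : ℂ) - (s : ℂ) - I * (τ + ε)))) * x (n - 1)
          + ((2 * I * (κ : ℂ) * ε * (((n : ℂ) - (s : ℂ) - 1) - I * (τ - ε)))
            / ((n : ℂ) * ((n : ℂ) - (s : ℂ) - I * (τ + ε)))) * x (n - 2))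
    (ρ : ℝ) (hρ : 0 < ρ)
    (P : ℂ → ℂ)
    (hP : ∀ z : ℂ, ‖z‖ < ρ → HasSum (fun n : ℕ => x n * z ^ n) (P z)) :
    ∀ z : ℂ, ‖z‖ < ρ →
      z * (1 - z) * deriv (deriv P) z
        + ((1 - (s : ℂ) - I * ε - I * τ) - 2 * (1 - I * ε * (κ : ℂ) - I * τ) * z
            - 2 * I * ε * (κ : ℂ) * z ^ 2) * deriv P z
        + (lam - ε ^ 2 + I * ε * (κ : ℂ) * (1 - 2 * (s : ℂ)) + (s : ℂ) * ((s : ℂ) + 1)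
            + τ * (I + τ) + 2 * ε * (κ : ℂ) * (-I + I * (s : ℂ) + ε - τ) * z) * P z = 0 := by
  have hd1 := hasSum_deriv x P ρ hρ hP
  set u1 : ℕ → ℂ := fun n => (((n : ℕ) : ℂ) + 1) * x (n + 1) with hu1
  have hd2 := hasSum_deriv u1 (deriv P) ρ hρ hd1
  set u2 : ℕ → ℂ := fun n => (((n : ℕ) : ℂ) + 1) * u1 (n + 1) with hu2
  -- the combined coefficient identity
  have hcoeff : ∀ k : ℕ,
      shf u2 k - shf (shf u2) k
        + ((1 : ℂ) - (s : ℂ) - I * ε - I * τ) * u1 k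
        + (-2 * (1 - I * ε * (κ : ℂ) - I * τ)) * shf u1 k
        + (-(2 * I * ε * (κ : ℂ))) * shf (shf u1) k
        + (lam - ε ^ 2 + I * ε * (κ : ℂ) * (1 - 2 * (s : ℂ)) + (s : ℂ) * ((s : ℂ) + 1)
            + τ * (I + τ)) * x k
        + (2 * ε * (κ : ℂ) * (-I + I * (s : ℂ) + ε - τ)) * shf x k = 0 := by
    intro k
    match k with
    | 0 =>
      have h1 : (1 : ℂ) - (s : ℂ) - I * (τ + ε) ≠ 0 := by
        have := hnz 1 le_rfl; push_cast at this; exact this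
      have key0 : ((1 : ℂ) - (s : ℂ) - I * (τ + ε)) * x 1
          = (-lam + ((1 : ℂ) - (s : ℂ) - I * τ - 1) * ((1 : ℂ) + (s : ℂ) - I * τ)
              + I * (κ : ℂ) * ε * (-2 * (1 : ℂ) + 2 * (s : ℂ) + 1) + ε ^ 2) * x 0 := by
        rw [hx1]
        field_simp
      simp only [shf_zero, hu1, hu2]
      push_cast
      linear_combination key0 + (τ ^ 2 * x 0) * Complex.I_sq
    | 1 =>
      have h2nz : (2 : ℂ) - (s : ℂ) - I * (τ + ε) ≠ 0 := by
        have := hnz 2 (by norm_num); push_cast at this; exact this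
      have hr := hrec 2 (by norm_num)
      simp only [show (2 : ℕ) - 1 = 1 from rfl, show (2 : ℕ) - 2 = 0 from rfl] at hr
      push_cast at hr
      have key2 : (2 : ℂ) * ((2 : ℂ) - (s : ℂ) - I * (τ + ε)) * x 2
          = (-lam + ((2 : ℂ) - (s : ℂ) - I * τ - 1) * ((2 : ℂ) + (s : ℂ) - I * τ)
              + I * (κ : ℂ) * ε * (-2 * (2 : ℂ) + 2 * (s : ℂ) + 1) + ε ^ 2) * x 1
            + (2 * I * (κ : ℂ) * ε * (((2 : ℂ) - (s : ℂ) - 1) - I * (τ - ε))) * x 0 := by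
        rw [hr]
        field_simp
      simp only [shf_zero, shf_succ, hu1, hu2]
      push_cast
      linear_combination key2 + (τ ^ 2 * x 1 - 2 * (κ : ℂ) * ε * (τ - ε) * x 0) * Complex.I_sq
    | (l + 2) =>
      have hlnz : ((l : ℂ) + 3) ≠ 0 := by
        have h := Nat.cast_ne_zero (R := ℂ).mpr (show l + 3 ≠ 0 by omega)
        push_cast at h; exact h
      have hnz' : ((l : ℂ) + 3) - (s : ℂ) - I * (τ + ε) ≠ 0 := by
        have := hnz (l + 3) (by omega); push_cast at this; exact this
      have hr := hrec (l + 3) (by omega)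
      simp only [show l + 3 - 1 = l + 2 from rfl, show l + 3 - 2 = l + 1 from rfl] at hr
      push_cast at hr
      have key : ((l : ℂ) + 3) * (((l : ℂ) + 3) - (s : ℂ) - I * (τ + ε)) * x (l + 3)
          = (-lam + (((l : ℂ) + 3) - (s : ℂ) - I * τ - 1) * (((l : ℂ) + 3) + (s : ℂ) - I * τ)
              + I * (κ : ℂ) * ε * (-2 * ((l : ℂ) + 3) + 2 * (s : ℂ) + 1) + ε ^ 2) * x (l + 2)
            + (2 * I * (κ : ℂ) * ε * ((((l : ℂ) + 3) - (s : ℂ) - 1) - I * (τ - ε))) * x (l + 1) := by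
        rw [hr]
        field_simp
      simp only [shf_succ, hu1, hu2]
      simp only [show l + 1 + 1 = l + 2 from rfl, show l + 2 + 1 = l + 3 from rfl]
      push_cast
      linear_combination key
        + (τ ^ 2 * x (l + 2) - 2 * (κ : ℂ) * ε * (τ - ε) * x (l + 1)) * Complex.I_sq
  intro z hz
  have H0 := hP z hz
  have H1 := hd1 z hz
  have H2 := hd2 z hz
  have HA := hasSum_shf H2
  have HB := hasSum_shf HA
  have HC := H1.mul_left ((1 : ℂ) - (s : ℂ) - I * ε - I * τ)
  have HD := (hasSum_shf H1).mul_left (-2 * (1 - I * ε * (κ : ℂ) - I * τ))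
  have HE := (hasSum_shf (hasSum_shf H1)).mul_left (-(2 * I * ε * (κ : ℂ)))
  have HF := H0.mul_left (lam - ε ^ 2 + I * ε * (κ : ℂ) * (1 - 2 * (s : ℂ))
      + (s : ℂ) * ((s : ℂ) + 1) + τ * (I + τ))
  have HG := (hasSum_shf H0).mul_left (2 * ε * (κ : ℂ) * (-I + I * (s : ℂ) + ε - τ))
  have Htot := (((((HA.sub HB).add HC).add HD).add HE).add HF).add HG
  have hfun : (fun k : ℕ =>
      (((((shf u2 k * z ^ k - shf (shf u2) k * z ^ k)
        + ((1 : ℂ) - (s : ℂ) - I * ε - I * τ) * (u1 k * z ^ k))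
        + (-2 * (1 - I * ε * (κ : ℂ) - I * τ)) * (shf u1 k * z ^ k))
        + (-(2 * I * ε * (κ : ℂ))) * (shf (shf u1) k * z ^ k))
        + (lam - ε ^ 2 + I * ε * (κ : ℂ) * (1 - 2 * (s : ℂ)) + (s : ℂ) * ((s : ℂ) + 1)
            + τ * (I + τ)) * (x k * z ^ k))
        + (2 * ε * (κ : ℂ) * (-I + I * (s : ℂ) + ε - τ)) * (shf x k * z ^ k))
      = fun _ : ℕ => (0 : ℂ) := by
    funext k
    linear_combination z ^ k * hcoeff k
  rw [hfun] at Htot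
  have hV := Htot.unique hasSum_zero
  linear_combination hV
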